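/- (i) The non-symmetric algebraic Riccati equation (NARE) has a stabilizing solution Λ_{2∞} if and only if condition (H_g) holds, i.e., the 2n eigenvalues of 𝔸_∞ (counted with multiplicity, over ℂ) split as exactly n in the open left half plane and n in the open right half plane, and the associated n-dimensional stable invariant subspace of 𝔸_∞ is a graph subspace (it is spanned by the columns of a 2n×n real matrix whose top n×n submatrix is invertible). (ii) If (H_g) holds, the stabilizing solution of the NARE is unique. -/

import Mathlib

open Matrix
open scoped Classical

section MyAux
open Polynomial

variable {k : Type*} [Fintype k] [DecidableEq k]

lemma my_eval_charpoly (M : Matrix k k ℂ) (μ : ℂ) :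
    M.charpoly.eval μ = (μ • (1 : Matrix k k ℂ) - M).det := by
  have h0 : M.charpoly.eval μ = ((charmatrix M).map (evalRingHom μ)).det := by
    rw [Matrix.charpoly]
    rw [show (charmatrix M).map (evalRingHom μ) = (evalRingHom μ).mapMatrix (charmatrix M) from rfl,
      ← RingHom.map_det]
    rfl
  rw [h0]
  congr 1
  ext i j
  by_cases h : i = j
  · subst h; simp [charmatrix_apply_eq, Matrix.one_apply, Matrix.sub_apply]
  · simp [charmatrix_apply_ne _ _ _ h, Matrix.one_apply_ne h, Matrix.sub_apply, h]

lemma my_mem_spectrum_iff (M : Matrix k k ℂ) (μ : ℂ) :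
    μ ∈ spectrum ℂ M ↔ μ ∈ M.charpoly.roots := by
  rw [spectrum.mem_iff, Polynomial.mem_roots (M.charpoly_monic.ne_zero),
    Algebra.algebraMap_eq_smul_one, Polynomial.IsRoot, my_eval_charpoly]
  constructor
  · intro h
    by_contra hne
    exact h ((Matrix.isUnit_iff_isUnit_det _).mpr (isUnit_iff_ne_zero.mpr hne))
  · intro h hu
    rw [Matrix.isUnit_iff_isUnit_det, h] at hu
    exact hu.ne_zero rfl

lemma my_card_roots (M : Matrix k k ℂ) : M.charpoly.roots.card = Fintype.card k := by
  rw [← Matrix.charpoly_natDegree_eq_dim M]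
  exact (Polynomial.splits_iff_card_roots.mp (IsAlgClosed.splits _))

lemma my_charpoly_similar {R : Type*} [CommRing R] (T Ti Bm : Matrix k k R)
    (h1 : T * Ti = 1) (h2 : Ti * T = 1) :
    (T * Bm * Ti).charpoly = Bm.charpoly := by
  have hmapmul : ∀ X Y : Matrix k k R, ((X * Y).map (C : R → R[X]))
      = X.map C * Y.map C := fun X Y => Matrix.map_mul
  have hone : (1 : Matrix k k R).map (C : R → R[X]) = 1 :=
    Matrix.map_one _ (map_zero C) (map_one C)
  have key : charmatrix (T * Bm * Ti) = (T.map C) * charmatrix Bm * (Ti.map C) := by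
    show Matrix.scalar k (X : R[X]) - (C : R →+* R[X]).mapMatrix (T * Bm * Ti)
      = (T.map C) * (Matrix.scalar k (X : R[X]) - (C : R →+* R[X]).mapMatrix Bm) * (Ti.map C)
    rw [RingHom.mapMatrix_apply, RingHom.mapMatrix_apply]
    have expand : T.map C * (Matrix.scalar k (X : R[X]) - Bm.map C) * Ti.map C
        = T.map C * Matrix.scalar k (X : R[X]) * Ti.map C
          - T.map C * Bm.map C * Ti.map C := by noncomm_ring
    rw [expand]
    have hc : T.map C * Matrix.scalar k (X : R[X]) * Ti.map C = Matrix.scalar k (X : R[X]) := by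
      have hsc : T.map C * Matrix.scalar k (X : R[X]) = Matrix.scalar k (X : R[X]) * T.map C :=
        (Matrix.scalar_commute (X : R[X]) (fun r => Commute.all _ _) (T.map C)).eq.symm
      rw [hsc, Matrix.mul_assoc, ← hmapmul, h1, hone, Matrix.mul_one]
    rw [hc, hmapmul, hmapmul]
  rw [Matrix.charpoly, Matrix.charpoly, key, Matrix.det_mul, Matrix.det_mul]
  rw [mul_comm, ← mul_assoc, ← Matrix.det_mul, ← hmapmul, h2, hone, Matrix.det_one, one_mul]

lemma my_root_neg_transpose (N : Matrix k k ℂ) (μ : ℂ) :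
    μ ∈ (-Nᵀ).charpoly.roots ↔ -μ ∈ N.charpoly.roots := by
  rw [Polynomial.mem_roots ((-Nᵀ).charpoly_monic.ne_zero),
    Polynomial.mem_roots (N.charpoly_monic.ne_zero), Polynomial.IsRoot, Polynomial.IsRoot,
    my_eval_charpoly, my_eval_charpoly]
  have h1 : μ • (1 : Matrix k k ℂ) - (-Nᵀ) = ((-1 : ℂ) • ((-μ) • (1 : Matrix k k ℂ) - N))ᵀ := by
    rw [Matrix.transpose_smul, Matrix.transpose_sub, Matrix.transpose_smul,
      Matrix.transpose_one]
    rw [smul_sub, smul_smul]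
    norm_num
  rw [h1, Matrix.det_transpose, Matrix.det_smul]
  simp [pow_ne_zero]

lemma my_sylvester {l : Type*} [Fintype l] [DecidableEq l]
    (P : Matrix k k ℂ) (S : Matrix l l ℂ) (Xm : Matrix k l ℂ)
    (h : P * Xm = Xm * S)
    (hd : ∀ μ ∈ P.charpoly.roots, μ ∉ spectrum ℂ S) : Xm = 0 := by
  have hpow : ∀ m : ℕ, P ^ m * Xm = Xm * S ^ m := by
    intro m
    induction m with
    | zero => simp
    | succ m ih =>
      rw [pow_succ, pow_succ, Matrix.mul_assoc, h, ← Matrix.mul_assoc, ih, Matrix.mul_assoc]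
  have key : ∀ q : ℂ[X], (aeval P q) * Xm = Xm * (aeval S q) := by
    intro q
    induction q using Polynomial.induction_on with
    | C c => simp [Algebra.algebraMap_eq_smul_one, Matrix.smul_mul, Matrix.mul_smul]
    | add p q hp hq => rw [map_add, map_add, Matrix.add_mul, Matrix.mul_add, hp, hq]
    | monomial m c ih =>
      simp only [_root_.map_mul, map_pow, aeval_C, aeval_X, Algebra.algebraMap_eq_smul_one]
      rw [Matrix.mul_assoc (c • 1), hpow (m+1), Matrix.smul_mul, Matrix.smul_mul,
        Matrix.one_mul, ← Matrix.mul_smul, Matrix.one_mul]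
  have h1 : Xm * (aeval S P.charpoly) = 0 := by
    rw [← key, Matrix.aeval_self_charpoly, Matrix.zero_mul]
  have h2 : IsUnit (aeval S P.charpoly) := by
    have hfact := (IsAlgClosed.splits P.charpoly).eq_prod_roots_of_monic P.charpoly_monic
    rw [hfact]
    have main : ∀ s : Multiset ℂ, (∀ μ ∈ s, μ ∉ spectrum ℂ S) →
        IsUnit (aeval S (s.map fun a => X - C a).prod) := by
      intro s
      induction s using Multiset.induction_on with
      | empty => intro _; simp
      | cons a s ih =>
        intro hs
        rw [Multiset.map_cons, Multiset.prod_cons, _root_.map_mul]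
        refine IsUnit.mul ?_ (ih fun μ hμ => hs μ (Multiset.mem_cons_of_mem hμ))
        have ha : a ∉ spectrum ℂ S := hs a (Multiset.mem_cons_self a s)
        rw [spectrum.mem_iff, not_not] at ha
        simpa [map_sub, aeval_X, aeval_C] using ha.neg
    exact main _ hd
  obtain ⟨u, hu⟩ := h2
  have h3 : Xm * ((aeval S P.charpoly) * (↑u⁻¹ : Matrix l l ℂ)) = 0 := by
    rw [← Matrix.mul_assoc, h1, Matrix.zero_mul]
  rw [← hu, Units.mul_inv, Matrix.mul_one] at h3
  exact h3

lemma my_split_eq (p q : Polynomial ℂ) (hp : p ≠ 0) (hq : q ≠ 0)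
    (hproots : ∀ μ ∈ p.roots, μ.re < 0) (hqroots : ∀ μ ∈ q.roots, 0 < μ.re) :
    ((p * q).roots.filter fun μ => μ.re < 0) = p.roots ∧
    ((p * q).roots.filter fun μ => 0 < μ.re) = q.roots := by
  rw [Polynomial.roots_mul (mul_ne_zero hp hq), Multiset.filter_add, Multiset.filter_add]
  constructor
  · rw [Multiset.filter_eq_self.mpr hproots,
      Multiset.filter_eq_nil.mpr (fun μ hμ => by have := hqroots μ hμ; intro hc; linarith),
      add_zero]
  · rw [Multiset.filter_eq_self.mpr hqroots,
      Multiset.filter_eq_nil.mpr (fun μ hμ => by have := hproots μ hμ; intro hc; linarith),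
      zero_add]

lemma my_all_pos_of_counts (p q : Polynomial ℂ) (N : ℕ) (hp : p ≠ 0) (hq : q ≠ 0)
    (hproots : ∀ μ ∈ p.roots, μ.re < 0) (hcardq : q.roots.card = N)
    (hpos : Multiset.card (((p * q).roots).filter fun μ => 0 < μ.re) = N) :
    ∀ μ ∈ q.roots, 0 < μ.re := by
  rw [Polynomial.roots_mul (mul_ne_zero hp hq), Multiset.filter_add, Multiset.card_add] at hpos
  rw [Multiset.filter_eq_nil.mpr (fun μ hμ => by have := hproots μ hμ; intro hc; linarith)]
    at hpos
  rw [Multiset.card_zero, zero_add] at hpos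
  have hfull : (q.roots.filter fun μ => 0 < μ.re) = q.roots := by
    refine Multiset.eq_of_le_of_card_le (Multiset.filter_le _ _) ?_
    rw [hpos, hcardq]
  intro μ hμ
  rw [← hfull] at hμ
  exact (Multiset.mem_filter.mp hμ).2

end MyAux

/-- A real square matrix is Hurwitz if all of its (complex) eigenvalues have
strictly negative real part. -/
def IsHurwitz {m : Type*} [Fintype m] [DecidableEq m] (Z : Matrix m m ℝ) : Prop :=
  ∀ μ ∈ spectrum ℂ (Z.map (algebraMap ℝ ℂ)), μ.re < 0


lemma my_isHurwitz_iff_roots {k : Type*} [Fintype k] [DecidableEq k] (Z : Matrix k k ℝ) :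
    IsHurwitz Z ↔ ∀ μ ∈ ((Z.map (algebraMap ℝ ℂ)).charpoly).roots, μ.re < 0 := by
  unfold IsHurwitz
  constructor
  · intro h μ hμ; exact h μ ((my_mem_spectrum_iff _ μ).mpr hμ)
  · intro h μ hμ; exact h μ ((my_mem_spectrum_iff _ μ).mp hμ)

lemma my_isHurwitz_iff_negT_roots {k : Type*} [Fintype k] [DecidableEq k] (Z : Matrix k k ℝ) :
    IsHurwitz Z ↔ ∀ μ ∈ (((-Zᵀ).map (algebraMap ℝ ℂ)).charpoly).roots, 0 < μ.re := by
  have hmap : (-Zᵀ).map (algebraMap ℝ ℂ) = -((Z.map (algebraMap ℝ ℂ))ᵀ) := by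
    ext i j; simp [Matrix.map_apply]
  rw [my_isHurwitz_iff_roots, hmap]
  constructor
  · intro h μ hμ
    have h2 := h (-μ) ((my_root_neg_transpose _ μ).mp hμ)
    rw [Complex.neg_re] at h2
    linarith
  · intro h μ hμ
    have h2 : -μ ∈ (-((Z.map (algebraMap ℝ ℂ))ᵀ)).charpoly.roots := by
      rw [my_root_neg_transpose, neg_neg]
      exact hμ
    have := h _ h2
    rw [Complex.neg_re] at this
    linarith

/-- `M = B R⁻¹ Bᵀ`. -/
noncomputable def Mmat (n n1 : ℕ) (B : Matrix (Fin n) (Fin n1) ℝ)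
    (R : Matrix (Fin n1) (Fin n1) ℝ) : Matrix (Fin n) (Fin n) ℝ :=
  B * R⁻¹ * Bᵀ

/-- `Λ_{2∞}` solves the non-symmetric algebraic Riccati equation (NARE)
`0 = Λ_{1∞} M Λ_{2∞} + Λ_{2∞} M Λ_{1∞} + Λ_{2∞} M Λ_{2∞}
   − (Λ_{1∞} G + Λ_{2∞}(A + G) + Aᵀ Λ_{2∞}) + QΓ`. -/
def IsNARESol (n n1 : ℕ) (A G Q Γ : Matrix (Fin n) (Fin n) ℝ)
    (B : Matrix (Fin n) (Fin n1) ℝ) (R : Matrix (Fin n1) (Fin n1) ℝ)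
    (L1inf L2inf : Matrix (Fin n) (Fin n) ℝ) : Prop :=
  0 = L1inf * Mmat n n1 B R * L2inf + L2inf * Mmat n n1 B R * L1inf
      + L2inf * Mmat n n1 B R * L2inf
      - (L1inf * G + L2inf * (A + G) + Aᵀ * L2inf) + Q * Γ

/-- A stabilizing solution of the NARE: it solves the NARE and both
`A_G = A − M(Λ_{1∞} + Λ_{2∞}) + G` and `A_M = A − M(Λ_{1∞} + Λ_{2∞}ᵀ)` are Hurwitz. -/
def IsStabilizingSol (n n1 : ℕ) (A G Q Γ : Matrix (Fin n) (Fin n) ℝ)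
    (B : Matrix (Fin n) (Fin n1) ℝ) (R : Matrix (Fin n1) (Fin n1) ℝ)
    (L1inf L2inf : Matrix (Fin n) (Fin n) ℝ) : Prop :=
  IsNARESol n n1 A G Q Γ B R L1inf L2inf ∧
  IsHurwitz (A - Mmat n n1 B R * (L1inf + L2inf) + G) ∧
  IsHurwitz (A - Mmat n n1 B R * (L1inf + L2infᵀ))

/-- The steady-state `2n × 2n` matrix
`𝔸_∞ = [[A − M Λ_{1∞} + G, −M], [QΓ − Λ_{1∞} G, −Aᵀ + Λ_{1∞} M]]`. -/
noncomputable def bbAinf (n n1 : ℕ) (A G Q Γ : Matrix (Fin n) (Fin n) ℝ)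
    (B : Matrix (Fin n) (Fin n1) ℝ) (R : Matrix (Fin n1) (Fin n1) ℝ)
    (L1inf : Matrix (Fin n) (Fin n) ℝ) :
    Matrix (Fin n ⊕ Fin n) (Fin n ⊕ Fin n) ℝ :=
  Matrix.fromBlocks (A - Mmat n n1 B R * L1inf + G) (-(Mmat n n1 B R))
    (Q * Γ - L1inf * G) (-Aᵀ + L1inf * Mmat n n1 B R)

/-- Condition (H_g): the `2n` eigenvalues of `𝔸_∞` (with multiplicity) have a strong
`(n,n)` c-splitting (exactly `n` in the open left half plane and `n` in the open right
half plane), and the `n`-dimensional stable invariant subspace of `𝔸_∞` is a graph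
subspace: it is spanned by the columns of a `2n × n` matrix `[U₁; U₂]` with `U₁`
invertible (equivalently, since the restriction of `𝔸_∞` to its stable invariant
subspace is Hurwitz, `𝔸_∞ [U₁;U₂] = [U₁;U₂] A_o` for some Hurwitz `A_o`). -/
def Hg (n n1 : ℕ) (A G Q Γ : Matrix (Fin n) (Fin n) ℝ)
    (B : Matrix (Fin n) (Fin n1) ℝ) (R : Matrix (Fin n1) (Fin n1) ℝ)
    (L1inf : Matrix (Fin n) (Fin n) ℝ) : Prop :=
  (Multiset.card
      (((bbAinf n n1 A G Q Γ B R L1inf).map (algebraMap ℝ ℂ)).charpoly.roots.filter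
        fun μ => μ.re < 0) = n ∧
    Multiset.card
      (((bbAinf n n1 A G Q Γ B R L1inf).map (algebraMap ℝ ℂ)).charpoly.roots.filter
        fun μ => 0 < μ.re) = n) ∧
  ∃ U1 U2 Ao : Matrix (Fin n) (Fin n) ℝ,
    IsUnit U1 ∧ IsHurwitz Ao ∧
    bbAinf n n1 A G Q Γ B R L1inf * Matrix.fromRows U1 U2
      = Matrix.fromRows U1 U2 * Ao

/-- Under (H1), with `Λ_{1∞}` the positive semidefinite solution of
the ARE: (i) the NARE has a stabilizing solution `Λ_{2∞}` if and only if (H_g) holds;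
(ii) if (H_g) holds, the stabilizing solution is unique. -/
theorem nare_stabilizing_solution_iff_Hg
    (n n1 : ℕ) (hn : 0 < n) (hn1 : 0 < n1)
    (A G Q Γ : Matrix (Fin n) (Fin n) ℝ)
    (B : Matrix (Fin n) (Fin n1) ℝ) (R : Matrix (Fin n1) (Fin n1) ℝ)
    (hR : R.PosDef) (hQ : Q.PosSemidef)
    -- (H1): (A,B) stabilizable and (A, Q^{1/2}) detectable
    (hstab : ∃ K : Matrix (Fin n1) (Fin n) ℝ, IsHurwitz (A - B * K))
    (hdet : ∃ L : Matrix (Fin n) (Fin n) ℝ, IsHurwitz (A - L * (hQ.1.eigenvectorUnitary.1 *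
      diagonal ((↑) ∘ (√·) ∘ hQ.1.eigenvalues) *
      (star hQ.1.eigenvectorUnitary : Matrix (Fin n) (Fin n) ℝ))))
    (L1inf : Matrix (Fin n) (Fin n) ℝ)
    (hL1 : L1inf.PosSemidef ∧
      L1inf * Mmat n n1 B R * L1inf - (L1inf * A + Aᵀ * L1inf) - Q = 0) :
    ((∃ L2inf : Matrix (Fin n) (Fin n) ℝ,
        IsStabilizingSol n n1 A G Q Γ B R L1inf L2inf)
      ↔ Hg n n1 A G Q Γ B R L1inf) ∧
    (Hg n n1 A G Q Γ B R L1inf →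
      ∀ L2inf L2inf' : Matrix (Fin n) (Fin n) ℝ,
        IsStabilizingSol n n1 A G Q Γ B R L1inf L2inf →
        IsStabilizingSol n n1 A G Q Γ B R L1inf L2inf' →
        L2inf = L2inf') := by
  classical
  obtain ⟨hL1psd, hL1are⟩ := hL1
  set Mm := Mmat n n1 B R with hMmdef
  have hRt : Rᵀ = R := by
    rw [← Matrix.conjTranspose_eq_transpose_of_trivial]; exact hR.1
  have hL1sym : L1infᵀ = L1inf := by
    rw [← Matrix.conjTranspose_eq_transpose_of_trivial]; exact hL1psd.1
  have hMsym : Mmᵀ = Mm := by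
    rw [hMmdef]
    unfold Mmat
    rw [Matrix.transpose_mul, Matrix.transpose_mul, Matrix.transpose_transpose,
      Matrix.transpose_nonsing_inv, hRt]
    exact (Matrix.mul_assoc _ _ _).symm
  have hAMt : ∀ L2 : Matrix (Fin n) (Fin n) ℝ,
      (A - Mm * (L1inf + L2ᵀ))ᵀ = Aᵀ - (L1inf + L2) * Mm := by
    intro L2
    rw [Matrix.transpose_sub, Matrix.transpose_mul, Matrix.transpose_add,
      Matrix.transpose_transpose, hMsym, hL1sym]
  -- NARE ↔ graph identity
  have graph_iff : ∀ L2 : Matrix (Fin n) (Fin n) ℝ,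
      IsNARESol n n1 A G Q Γ B R L1inf L2 ↔
      (Q * Γ - L1inf * G) + (-Aᵀ + L1inf * Mm) * L2
        = L2 * (A - Mm * (L1inf + L2) + G) := by
    intro L2
    unfold IsNARESol
    simp only [← hMmdef]
    rw [eq_comm, ← sub_eq_zero (a := (Q * Γ - L1inf * G) + (-Aᵀ + L1inf * Mm) * L2)]
    have hid : (L1inf * Mm * L2 + L2 * Mm * L1inf + L2 * Mm * L2
        - (L1inf * G + L2 * (A + G) + Aᵀ * L2) + Q * Γ)
        = ((Q * Γ - L1inf * G) + (-Aᵀ + L1inf * Mm) * L2)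
          - (L2 * (A - Mm * (L1inf + L2) + G)) := by noncomm_ring
    rw [hid]
  -- charpoly factorization for NARE solutions
  have hfact : ∀ L2 : Matrix (Fin n) (Fin n) ℝ,
      IsNARESol n n1 A G Q Γ B R L1inf L2 →
      ((bbAinf n n1 A G Q Γ B R L1inf).map (algebraMap ℝ ℂ)).charpoly
        = ((A - Mm * (L1inf + L2) + G).map (algebraMap ℝ ℂ)).charpoly *
          ((-(A - Mm * (L1inf + L2ᵀ))ᵀ).map (algebraMap ℝ ℂ)).charpoly := by
    intro L2 hN
    rw [graph_iff] at hN
    have hsim : bbAinf n n1 A G Q Γ B R L1inf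
        = (fromBlocks 1 0 L2 1) *
          (fromBlocks (A - Mm * (L1inf + L2) + G) (-Mm) 0 (-(A - Mm * (L1inf + L2ᵀ))ᵀ)) *
          (fromBlocks 1 0 (-L2) 1) := by
      rw [Matrix.fromBlocks_multiply, Matrix.fromBlocks_multiply]
      unfold bbAinf
      simp only [← hMmdef]
      rw [hAMt L2, Matrix.fromBlocks_inj]
      refine ⟨?_, ?_, ?_, ?_⟩
      · noncomm_ring
      · noncomm_ring
      · rw [← sub_eq_zero]
        have hkey : Q * Γ - L1inf * G
            - (((L2 * (A - Mm * (L1inf + L2) + G) + 1 * 0) * 1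
              + (L2 * -Mm + 1 * -(Aᵀ - (L1inf + L2) * Mm)) * -L2))
            = ((Q * Γ - L1inf * G) + (-Aᵀ + L1inf * Mm) * L2)
              - (L2 * (A - Mm * (L1inf + L2) + G)) := by noncomm_ring
        rw [hkey, hN, sub_self]
      · noncomm_ring
    have hTT : (fromBlocks 1 0 L2 1 : Matrix (Fin n ⊕ Fin n) (Fin n ⊕ Fin n) ℝ)
        * fromBlocks 1 0 (-L2) 1 = 1 := by
      rw [Matrix.fromBlocks_multiply]
      simp [Matrix.fromBlocks_one]
    have hTT' : (fromBlocks 1 0 (-L2) 1 : Matrix (Fin n ⊕ Fin n) (Fin n ⊕ Fin n) ℝ)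
        * fromBlocks 1 0 L2 1 = 1 := by
      rw [Matrix.fromBlocks_multiply]
      simp [Matrix.fromBlocks_one]
    have honemap : (1 : Matrix (Fin n ⊕ Fin n) (Fin n ⊕ Fin n) ℝ).map (algebraMap ℝ ℂ) = 1 :=
      Matrix.map_one _ (map_zero _) (map_one _)
    have hmap : (bbAinf n n1 A G Q Γ B R L1inf).map (algebraMap ℝ ℂ)
        = ((fromBlocks 1 0 L2 1).map (algebraMap ℝ ℂ))
          * ((fromBlocks (A - Mm * (L1inf + L2) + G) (-Mm) 0
              (-(A - Mm * (L1inf + L2ᵀ))ᵀ)).map (algebraMap ℝ ℂ))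
          * ((fromBlocks 1 0 (-L2) 1).map (algebraMap ℝ ℂ)) := by
      rw [hsim, Matrix.map_mul, Matrix.map_mul]
    rw [hmap, my_charpoly_similar _ _ _
      (by rw [← Matrix.map_mul, hTT, honemap]) (by rw [← Matrix.map_mul, hTT', honemap])]
    rw [Matrix.fromBlocks_map]
    rw [show (0 : Matrix (Fin n) (Fin n) ℝ).map (algebraMap ℝ ℂ) = 0 from
      Matrix.map_zero _ (map_zero _)]
    rw [Matrix.charpoly_fromBlocks_zero₂₁]
  -- counting direction: stabilizing solution gives the eigenvalue counts
  have hcount : ∀ L2 : Matrix (Fin n) (Fin n) ℝ,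
      IsStabilizingSol n n1 A G Q Γ B R L1inf L2 →
      (Multiset.card
          ((((bbAinf n n1 A G Q Γ B R L1inf).map (algebraMap ℝ ℂ)).charpoly).roots.filter
            fun μ => μ.re < 0) = n ∧
        Multiset.card
          ((((bbAinf n n1 A G Q Γ B R L1inf).map (algebraMap ℝ ℂ)).charpoly).roots.filter
            fun μ => 0 < μ.re) = n) := by
    intro L2 h
    obtain ⟨hN, hAG, hAM⟩ := h
    simp only [← hMmdef] at hAG hAM
    have hAGroots := (my_isHurwitz_iff_roots _).mp hAG
    have hAMroots := (my_isHurwitz_iff_negT_roots _).mp hAM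
    have hsplit := my_split_eq _ _
      (Matrix.charpoly_monic _).ne_zero (Matrix.charpoly_monic _).ne_zero hAGroots hAMroots
    constructor
    · rw [hfact L2 hN, hsplit.1, my_card_roots]
      simp
    · rw [hfact L2 hN, hsplit.2, my_card_roots]
      simp
  refine ⟨⟨?_, ?_⟩, ?_⟩
  · -- forward: stabilizing solution → Hg
    rintro ⟨L2, hSol⟩
    obtain ⟨hN, hAG, hAM⟩ := hSol
    simp only [← hMmdef] at hAG hAM
    refine ⟨hcount L2 ⟨hN, by simp only [← hMmdef]; exact hAG, by simp only [← hMmdef]; exact hAM⟩,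
      1, L2, A - Mm * (L1inf + L2) + G, isUnit_one, hAG, ?_⟩
    unfold bbAinf
    simp only [← hMmdef]
    rw [Matrix.fromBlocks_mul_fromRows, Matrix.fromRows_mul]
    rw [Matrix.fromRows_ext_iff]
    constructor
    · noncomm_ring
    · rw [Matrix.mul_one]
      exact (graph_iff L2).mp hN
  · -- backward: Hg → stabilizing solution
    rintro ⟨⟨hcneg, hcpos⟩, U1, U2, Ao, hU1, hAo, hU⟩
    have hU1det : IsUnit U1.det := (Matrix.isUnit_iff_isUnit_det U1).mp hU1
    have hU1i : U1 * U1⁻¹ = 1 := Matrix.mul_nonsing_inv _ hU1det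
    have hU1i' : U1⁻¹ * U1 = 1 := Matrix.nonsing_inv_mul _ hU1det
    set L2 := U2 * U1⁻¹ with hL2def
    unfold bbAinf at hU
    rw [Matrix.fromBlocks_mul_fromRows, Matrix.fromRows_mul] at hU
    obtain ⟨e1, e2⟩ := (Matrix.fromRows_ext_iff _ _ _ _).mp hU
    simp only [← hMmdef] at e1 e2
    have hAGU1 : (A - Mm * (L1inf + L2) + G) * U1 = U1 * Ao := by
      rw [← e1]
      have hexp : (A - Mm * (L1inf + L2) + G) * U1
          = (A - Mm * L1inf + G) * U1 - Mm * (U2 * (U1⁻¹ * U1)) := by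
        rw [hL2def]; noncomm_ring
      rw [hexp, hU1i', Matrix.mul_one]
      noncomm_ring
    have hAGeq : (A - Mm * (L1inf + L2) + G) = U1 * Ao * U1⁻¹ := by
      rw [← hAGU1, Matrix.mul_assoc, hU1i, Matrix.mul_one]
    have honemap : (1 : Matrix (Fin n) (Fin n) ℝ).map (algebraMap ℝ ℂ) = 1 :=
      Matrix.map_one _ (map_zero _) (map_one _)
    have hAGhur : IsHurwitz (A - Mm * (L1inf + L2) + G) := by
      rw [my_isHurwitz_iff_roots]
      have hcp : (((A - Mm * (L1inf + L2) + G).map (algebraMap ℝ ℂ)).charpoly)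
          = ((Ao.map (algebraMap ℝ ℂ)).charpoly) := by
        rw [hAGeq, Matrix.map_mul, Matrix.map_mul]
        exact my_charpoly_similar _ _ _
          (by rw [← Matrix.map_mul, hU1i, honemap]) (by rw [← Matrix.map_mul, hU1i', honemap])
      rw [hcp]
      exact (my_isHurwitz_iff_roots _).mp hAo
    have hgr : (Q * Γ - L1inf * G) + (-Aᵀ + L1inf * Mm) * L2
        = L2 * (A - Mm * (L1inf + L2) + G) := by
      have step1 : (Q * Γ - L1inf * G) + (-Aᵀ + L1inf * Mm) * L2
          = ((Q * Γ - L1inf * G) * U1 + (-Aᵀ + L1inf * Mm) * U2) * U1⁻¹ := by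
        have hexp : ((Q * Γ - L1inf * G) * U1 + (-Aᵀ + L1inf * Mm) * U2) * U1⁻¹
            = (Q * Γ - L1inf * G) * (U1 * U1⁻¹) + (-Aᵀ + L1inf * Mm) * (U2 * U1⁻¹) := by
          noncomm_ring
        rw [hexp, hU1i, Matrix.mul_one, hL2def]
      have step2 : (U2 * Ao) * U1⁻¹ = L2 * (A - Mm * (L1inf + L2) + G) := by
        rw [hAGeq, hL2def]
        have hexp : (U2 * U1⁻¹) * (U1 * Ao * U1⁻¹) = U2 * ((U1⁻¹ * U1) * (Ao * U1⁻¹)) := by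
          noncomm_ring
        rw [hexp, hU1i', Matrix.one_mul, ← Matrix.mul_assoc]
      rw [step1, e2, step2]
    have hNX : IsNARESol n n1 A G Q Γ B R L1inf L2 := (graph_iff L2).mpr hgr
    have hAMhur : IsHurwitz (A - Mm * (L1inf + L2ᵀ)) := by
      rw [my_isHurwitz_iff_negT_roots]
      have hcpos' := hcpos
      rw [hfact L2 hNX] at hcpos'
      refine my_all_pos_of_counts _ _ n
        (Matrix.charpoly_monic _).ne_zero (Matrix.charpoly_monic _).ne_zero
        ((my_isHurwitz_iff_roots _).mp hAGhur) ?_ hcpos'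
      rw [my_card_roots]
      simp
    exact ⟨L2, hNX, by simp only [← hMmdef]; exact hAGhur, by simp only [← hMmdef]; exact hAMhur⟩
  · -- uniqueness
    intro _ L2 L2' h h'
    obtain ⟨hN, hAG, hAM⟩ := h
    obtain ⟨hN', hAG', hAM'⟩ := h'
    simp only [← hMmdef] at hAG hAM hAG' hAM'
    have g := (graph_iff L2).mp hN
    have g' := (graph_iff L2').mp hN'
    have hrel : (-Aᵀ + (L1inf + L2') * Mm) * (L2 - L2')
        = (L2 - L2') * (A - Mm * (L1inf + L2) + G) := by
      rw [← sub_eq_zero]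
      have hkey : (-Aᵀ + (L1inf + L2') * Mm) * (L2 - L2')
          - (L2 - L2') * (A - Mm * (L1inf + L2) + G)
          = (L2' * (A - Mm * (L1inf + L2') + G)
              - ((Q * Γ - L1inf * G) + (-Aᵀ + L1inf * Mm) * L2'))
            - (L2 * (A - Mm * (L1inf + L2) + G)
              - ((Q * Γ - L1inf * G) + (-Aᵀ + L1inf * Mm) * L2)) := by noncomm_ring
      rw [hkey, g, g', sub_self, sub_self, sub_zero]
    have hrelC : ((-Aᵀ + (L1inf + L2') * Mm).map (algebraMap ℝ ℂ)) * ((L2 - L2').map (algebraMap ℝ ℂ))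
        = ((L2 - L2').map (algebraMap ℝ ℂ)) * ((A - Mm * (L1inf + L2) + G).map (algebraMap ℝ ℂ)) := by
      rw [← Matrix.map_mul, ← Matrix.map_mul, hrel]
    have hDC : (L2 - L2').map (algebraMap ℝ ℂ) = 0 := by
      refine my_sylvester _ _ _ hrelC ?_
      intro μ hμ
      have hPid : (-Aᵀ + (L1inf + L2') * Mm) = -((A - Mm * (L1inf + L2'ᵀ))ᵀ) := by
        rw [hAMt]; noncomm_ring
      rw [hPid] at hμ
      have hpos : 0 < μ.re := (my_isHurwitz_iff_negT_roots _).mp hAM' μ hμ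
      intro hspec
      have hneg : μ.re < 0 := hAG μ hspec
      linarith
    have hD0 : L2 - L2' = 0 := by
      ext i j
      have hij := congrFun (congrFun hDC i) j
      simp only [Matrix.map_apply, Matrix.zero_apply, Matrix.sub_apply] at hij ⊢
      exact (algebraMap ℝ ℂ).injective (by rw [hij, map_zero])
    exact sub_eq_zero.mp hD0
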